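/- For every integer n ≥ 1 and every (y,z) ∈ ℝ × ℝ^d: the defining set of g_n(y,z) is bounded below, −f − C·(|y| + ‖z‖^α) ≤ g_n(y,z) ≤ g_{n+1}(y,z), and |g_n(y,z)| ≤ f + C·(|y| + ‖z‖^α); if moreover g satisfies part (i) of condition (H1a), then also g_n(y,z) ≤ g(y,z) for all (y,z). -/

import Mathlib

open Filter Topology

/-- The embedding of a rational vector into `ℝ^d` (with the Euclidean norm). -/
noncomputable def qcast (d : ℕ) (v : Fin d → ℚ) : EuclideanSpace ℝ (Fin d) :=
  (WithLp.equiv 2 (Fin d → ℝ)).symm fun i => (v i : ℝ)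

/-- The rational inf-convolution
`g_n(y,z) := inf_{(u,v) ∈ ℚ × ℚ^d} ( g(u,v) + n·C·(|y − u| + ‖z − v‖^α) )`. -/
noncomputable def gq (d : ℕ) (C α : ℝ) (g : ℝ → EuclideanSpace ℝ (Fin d) → ℝ)
    (n : ℕ) (y : ℝ) (z : EuclideanSpace ℝ (Fin d)) : ℝ :=
  ⨅ p : ℚ × (Fin d → ℚ),
    (g (p.1 : ℝ) (qcast d p.2) + (n : ℝ) * C * (|y - (p.1 : ℝ)| + ‖z - qcast d p.2‖ ^ α))

lemma real_rpow_add_le {a b α : ℝ} (ha : 0 ≤ a) (hb : 0 ≤ b) (h0 : 0 ≤ α) (h1 : α ≤ 1) :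
    (a + b) ^ α ≤ a ^ α + b ^ α := by
  lift a to NNReal using ha
  lift b to NNReal using hb
  rw [← NNReal.coe_add, ← NNReal.coe_rpow, ← NNReal.coe_rpow, ← NNReal.coe_rpow,
    ← NNReal.coe_add, NNReal.coe_le_coe]
  exact NNReal.rpow_add_le_add_rpow a b h0 h1

lemma norm_rpow_tri {d : ℕ} {α : ℝ} (h0 : 0 ≤ α) (h1 : α ≤ 1)
    (z v : EuclideanSpace ℝ (Fin d)) : ‖v‖ ^ α ≤ ‖z‖ ^ α + ‖z - v‖ ^ α := by
  have h : ‖v‖ ≤ ‖z‖ + ‖z - v‖ := by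
    have := norm_sub_le z (z - v); simpa using this
  calc ‖v‖ ^ α ≤ (‖z‖ + ‖z - v‖) ^ α := Real.rpow_le_rpow (norm_nonneg _) h h0
    _ ≤ ‖z‖ ^ α + ‖z - v‖ ^ α := real_rpow_add_le (norm_nonneg _) (norm_nonneg _) h0 h1

lemma qcast_approx (d : ℕ) (z : EuclideanSpace ℝ (Fin d)) {δ : ℝ} (hδ : 0 < δ) :
    ∃ v : Fin d → ℚ, ‖z - qcast d v‖ < δ := by
  have hε : 0 < δ / (d + 1) := by positivity
  choose v hv using fun i : Fin d => exists_rat_near (z i) hε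
  refine ⟨v, ?_⟩
  have hnorm : ‖z - qcast d v‖ = Real.sqrt (∑ i, ‖z i - (v i : ℝ)‖ ^ 2) := by
    rw [EuclideanSpace.norm_eq]
    simp [qcast, WithLp.equiv_symm_apply, PiLp.toLp_apply]
  have hsum : ∑ i, ‖z i - (v i : ℝ)‖ ^ 2 ≤ (d : ℝ) * (δ / (d + 1)) ^ 2 := by
    calc ∑ i, ‖z i - (v i : ℝ)‖ ^ 2 ≤ ∑ _i : Fin d, (δ / (d + 1)) ^ 2 := by
          refine Finset.sum_le_sum fun i _ => ?_
          have := (hv i).le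
          have h2 : ‖z i - (v i : ℝ)‖ = |z i - (v i : ℝ)| := rfl
          rw [h2]
          nlinarith [abs_nonneg (z i - (v i : ℝ))]
      _ = (d : ℝ) * (δ / (d + 1)) ^ 2 := by
          simp [Finset.sum_const, Finset.card_univ, mul_comm]
  have h1 : ‖z - qcast d v‖ ≤ Real.sqrt ((d : ℝ) * (δ / (d + 1)) ^ 2) := by
    rw [hnorm]; exact Real.sqrt_le_sqrt hsum
  have h2 : Real.sqrt ((d : ℝ) * (δ / (d + 1)) ^ 2)
      = Real.sqrt (d : ℝ) * (δ / (d + 1)) := by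
    rw [Real.sqrt_mul (by positivity), Real.sqrt_sq hε.le]
  have h3 : Real.sqrt (d : ℝ) ≤ (d : ℝ) := by
    have : ((d : ℝ)) ≤ ((d : ℝ)) ^ 2 := by
      rcases Nat.eq_zero_or_pos d with h | h
      · simp [h]
      · have : (1 : ℝ) ≤ (d : ℝ) := by exact_mod_cast h
        nlinarith
    calc Real.sqrt (d : ℝ) ≤ Real.sqrt ((d : ℝ) ^ 2) := Real.sqrt_le_sqrt this
      _ = (d : ℝ) := Real.sqrt_sq (by positivity)
  have h4 : (d : ℝ) * (δ / (d + 1)) < δ := by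
    rw [div_eq_mul_inv, ← mul_assoc]
    rw [mul_inv_lt_iff₀ (by positivity)]
    nlinarith [Nat.cast_nonneg (α := ℝ) d]
  have h5 : Real.sqrt (d : ℝ) * (δ / (d + 1)) ≤ (d : ℝ) * (δ / (d + 1)) :=
    mul_le_mul_of_nonneg_right h3 (by positivity)
  calc ‖z - qcast d v‖ ≤ _ := h1
    _ = _ := h2
    _ ≤ _ := h5
    _ < δ := h4

/-- For every `n ≥ 1` and `(y,z)`: the defining set of `g_n(y,z)` is bounded
below, `−f − C·(|y| + ‖z‖^α) ≤ g_n(y,z) ≤ g_{n+1}(y,z)`, and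
`|g_n(y,z)| ≤ f + C·(|y| + ‖z‖^α)`; moreover if `g` satisfies part (i) of (H1a)
(left-continuity in `y`, jointly with `z`), then also `g_n(y,z) ≤ g(y,z)`. -/
theorem stmt_8 (d : ℕ) (hd : 1 ≤ d) (C α f : ℝ) (hC : 0 < C)
    (hα : 0 < α ∧ α < 1) (hf : 0 ≤ f)
    (g : ℝ → EuclideanSpace ℝ (Fin d) → ℝ)
    (H5 : ∀ (y : ℝ) (z : EuclideanSpace ℝ (Fin d)),
      |g y z| ≤ f + C * (|y| + ‖z‖ ^ α))
    (n : ℕ) (hn : 1 ≤ n) (y : ℝ) (z : EuclideanSpace ℝ (Fin d)) :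
    BddBelow (Set.range fun p : ℚ × (Fin d → ℚ) =>
      g (p.1 : ℝ) (qcast d p.2) +
        (n : ℝ) * C * (|y - (p.1 : ℝ)| + ‖z - qcast d p.2‖ ^ α)) ∧
    -f - C * (|y| + ‖z‖ ^ α) ≤ gq d C α g n y z ∧
    gq d C α g n y z ≤ gq d C α g (n + 1) y z ∧
    |gq d C α g n y z| ≤ f + C * (|y| + ‖z‖ ^ α) ∧
    ((∀ (y₀ : ℝ) (z₀ : EuclideanSpace ℝ (Fin d)),
        Tendsto (fun p : ℝ × EuclideanSpace ℝ (Fin d) => g p.1 p.2)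
          (𝓝[{p : ℝ × EuclideanSpace ℝ (Fin d) | p.1 ≤ y₀}] (y₀, z₀)) (𝓝 (g y₀ z₀))) →
      gq d C α g n y z ≤ g y z) := by
  have hα0 : 0 ≤ α := hα.1.le
  have hα1 : α ≤ 1 := hα.2.le
  -- uniform lower bound on all defining terms (for any m ≥ 1)
  have key : ∀ m : ℕ, 1 ≤ m → ∀ p : ℚ × (Fin d → ℚ),
      -f - C * (|y| + ‖z‖ ^ α) ≤
        g (p.1 : ℝ) (qcast d p.2) +
          (m : ℝ) * C * (|y - (p.1 : ℝ)| + ‖z - qcast d p.2‖ ^ α) := by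
    intro m hm p
    have h5 := (abs_le.mp (H5 (p.1 : ℝ) (qcast d p.2))).1
    have h1 : |(p.1 : ℝ)| ≤ |y| + |y - (p.1 : ℝ)| := by
      have := abs_sub_abs_le_abs_sub (p.1 : ℝ) y
      rw [abs_sub_comm] at this; linarith
    have h2 : ‖qcast d p.2‖ ^ α ≤ ‖z‖ ^ α + ‖z - qcast d p.2‖ ^ α :=
      norm_rpow_tri hα0 hα1 z _
    have hD : 0 ≤ |y - (p.1 : ℝ)| + ‖z - qcast d p.2‖ ^ α := by
      have := Real.rpow_nonneg (norm_nonneg (z - qcast d p.2)) α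
      have := abs_nonneg (y - (p.1 : ℝ)); linarith
    have hm' : (1 : ℝ) ≤ (m : ℝ) := by exact_mod_cast hm
    have hc1 : C * (|(p.1 : ℝ)| + ‖qcast d p.2‖ ^ α) ≤
        C * (|y| + ‖z‖ ^ α) + C * (|y - (p.1 : ℝ)| + ‖z - qcast d p.2‖ ^ α) := by
      rw [← mul_add]
      exact mul_le_mul_of_nonneg_left (by linarith) hC.le
    have hc2 : C * (|y - (p.1 : ℝ)| + ‖z - qcast d p.2‖ ^ α) ≤
        (m : ℝ) * C * (|y - (p.1 : ℝ)| + ‖z - qcast d p.2‖ ^ α) := by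
      apply mul_le_mul_of_nonneg_right _ hD
      nlinarith
    linarith
  have hbdd : ∀ m : ℕ, 1 ≤ m → BddBelow (Set.range fun p : ℚ × (Fin d → ℚ) =>
      g (p.1 : ℝ) (qcast d p.2) +
        (m : ℝ) * C * (|y - (p.1 : ℝ)| + ‖z - qcast d p.2‖ ^ α)) := by
    intro m hm
    exact ⟨-f - C * (|y| + ‖z‖ ^ α), by rintro x ⟨p, rfl⟩; exact key m hm p⟩
  have hbn := hbdd n hn
  have hlow : -f - C * (|y| + ‖z‖ ^ α) ≤ gq d C α g n y z :=
    le_ciInf (key n hn)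
  have hmono : gq d C α g n y z ≤ gq d C α g (n + 1) y z := by
    refine ciInf_mono hbn fun p => ?_
    have hD : 0 ≤ |y - (p.1 : ℝ)| + ‖z - qcast d p.2‖ ^ α := by
      have := Real.rpow_nonneg (norm_nonneg (z - qcast d p.2)) α
      have := abs_nonneg (y - (p.1 : ℝ)); linarith
    have hcast : ((n : ℝ)) ≤ ((n + 1 : ℕ) : ℝ) := by push_cast; linarith
    exact add_le_add_right
      (mul_le_mul_of_nonneg_right (mul_le_mul_of_nonneg_right hcast hC.le) hD) _
  -- upper bound
  have hup : gq d C α g n y z ≤ f + C * (|y| + ‖z‖ ^ α) := by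
    refine le_of_forall_pos_le_add fun ε hε => ?_
    set η : ℝ := ε / (2 * ((n : ℝ) + 1) * C) with hηdef
    have hη0 : 0 < η := by positivity
    obtain ⟨u, hu⟩ := exists_rat_near y hη0
    have hδ0 : 0 < η ^ (α⁻¹) := Real.rpow_pos_of_pos hη0 _
    obtain ⟨v, hv⟩ := qcast_approx d z hδ0
    have hvα : ‖z - qcast d v‖ ^ α ≤ η := by
      calc ‖z - qcast d v‖ ^ α ≤ (η ^ (α⁻¹)) ^ α :=
            Real.rpow_le_rpow (norm_nonneg _) hv.le hα0
        _ = η := by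
            rw [← Real.rpow_mul hη0.le, inv_mul_cancel₀ hα.1.ne', Real.rpow_one]
    have hterm : g (u : ℝ) (qcast d v) +
        (n : ℝ) * C * (|y - (u : ℝ)| + ‖z - qcast d v‖ ^ α) ≤
        f + C * (|y| + ‖z‖ ^ α) + ε := by
      have h5 := (abs_le.mp (H5 (u : ℝ) (qcast d v))).2
      have h1 : |(u : ℝ)| ≤ |y| + |y - (u : ℝ)| := by
        have := abs_sub_abs_le_abs_sub (u : ℝ) y
        rw [abs_sub_comm] at this; linarith
      have h2 : ‖qcast d v‖ ^ α ≤ ‖z‖ ^ α + ‖z - qcast d v‖ ^ α :=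
        norm_rpow_tri hα0 hα1 z _
      have ha : |y - (u : ℝ)| < η := hu
      have hb : 0 ≤ ‖z - qcast d v‖ ^ α := Real.rpow_nonneg (norm_nonneg _) α
      have ha0 : 0 ≤ |y - (u : ℝ)| := abs_nonneg _
      have hgu : g (u : ℝ) (qcast d v) ≤
          f + C * (|y| + ‖z‖ ^ α) + C * (|y - (u : ℝ)| + ‖z - qcast d v‖ ^ α) := by
        have : C * (|(u : ℝ)| + ‖qcast d v‖ ^ α) ≤
            C * (|y| + ‖z‖ ^ α) + C * (|y - (u : ℝ)| + ‖z - qcast d v‖ ^ α) := by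
          rw [← mul_add]; exact mul_le_mul_of_nonneg_left (by linarith) hC.le
        linarith
      have hεeq : 2 * ((n : ℝ) + 1) * C * η = ε := by
        rw [hηdef]; field_simp
      have hsum : ((n : ℝ) + 1) * C * (|y - (u : ℝ)| + ‖z - qcast d v‖ ^ α) ≤ ε := by
        have hle : |y - (u : ℝ)| + ‖z - qcast d v‖ ^ α ≤ 2 * η := by linarith
        calc ((n : ℝ) + 1) * C * (|y - (u : ℝ)| + ‖z - qcast d v‖ ^ α)
            ≤ ((n : ℝ) + 1) * C * (2 * η) :=
              mul_le_mul_of_nonneg_left hle (by positivity)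
          _ = ε := by rw [← hεeq]; ring
      nlinarith [mul_nonneg hC.le (add_nonneg ha0 hb)]
    calc gq d C α g n y z ≤ _ := ciInf_le hbn (u, v)
      _ ≤ f + C * (|y| + ‖z‖ ^ α) + ε := hterm
  have habs : |gq d C α g n y z| ≤ f + C * (|y| + ‖z‖ ^ α) :=
    abs_le.mpr ⟨by linarith, hup⟩
  refine ⟨hbn, hlow, hmono, habs, fun H1a => ?_⟩
  -- final part: gq ≤ g y z under left-continuity
  have H := H1a y z
  rw [Metric.tendsto_nhdsWithin_nhds] at H
  refine le_of_forall_pos_le_add fun ε hε => ?_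
  obtain ⟨δ₁, hδ₁, hH⟩ := H (ε / 2) (by positivity)
  have hn0 : (0 : ℝ) < (n : ℝ) := by exact_mod_cast hn
  set A : ℝ := ε / (4 * (n : ℝ) * C) with hAdef
  have hA0 : 0 < A := by positivity
  set η : ℝ := min δ₁ A with hηdef
  have hη0 : 0 < η := lt_min hδ₁ hA0
  obtain ⟨u, hu1, hu2⟩ := exists_rat_btwn (show y - η < y by linarith)
  have hau : |y - (u : ℝ)| < η := by
    rw [abs_lt]; constructor <;> linarith
  have hδz0 : 0 < min δ₁ (A ^ (α⁻¹)) := lt_min hδ₁ (Real.rpow_pos_of_pos hA0 _)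
  obtain ⟨v, hv⟩ := qcast_approx d z hδz0
  have hbα : ‖z - qcast d v‖ ^ α ≤ A := by
    calc ‖z - qcast d v‖ ^ α ≤ (A ^ (α⁻¹)) ^ α :=
          Real.rpow_le_rpow (norm_nonneg _) (hv.le.trans (min_le_right _ _)) hα0
      _ = A := by rw [← Real.rpow_mul hA0.le, inv_mul_cancel₀ hα.1.ne', Real.rpow_one]
  have hmem : ((u : ℝ), qcast d v) ∈ {p : ℝ × EuclideanSpace ℝ (Fin d) | p.1 ≤ y} :=
    hu2.le
  have hdist : dist ((u : ℝ), qcast d v) (y, z) < δ₁ := by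
    rw [Prod.dist_eq]
    refine max_lt ?_ ?_
    · rw [Real.dist_eq, abs_sub_comm]
      exact hau.trans_le (min_le_left _ _)
    · rw [dist_eq_norm, norm_sub_rev]
      exact hv.trans_le (min_le_left _ _)
  have hg := hH hmem hdist
  rw [Real.dist_eq, abs_lt] at hg
  have hterm : g (u : ℝ) (qcast d v) +
      (n : ℝ) * C * (|y - (u : ℝ)| + ‖z - qcast d v‖ ^ α) ≤ g y z + ε := by
    have hgu : g (u : ℝ) (qcast d v) < g y z + ε / 2 := by linarith [hg.2]
    have hle : |y - (u : ℝ)| + ‖z - qcast d v‖ ^ α ≤ 2 * A :=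
      by linarith [hau.le.trans (min_le_right δ₁ A)]
    have hAeq : (n : ℝ) * C * (2 * A) = ε / 2 := by
      rw [hAdef]; field_simp; ring
    have : (n : ℝ) * C * (|y - (u : ℝ)| + ‖z - qcast d v‖ ^ α) ≤ ε / 2 := by
      calc (n : ℝ) * C * (|y - (u : ℝ)| + ‖z - qcast d v‖ ^ α)
          ≤ (n : ℝ) * C * (2 * A) := mul_le_mul_of_nonneg_left hle (by positivity)
        _ = ε / 2 := hAeq
    linarith
  calc gq d C α g n y z ≤ _ := ciInf_le hbn (u, v)
    _ ≤ g y z + ε := hterm
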